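/- With the notation of the parameterized matrix W^k_λ(z) for a finite stochastic game, the equation val W^k_λ(z) = 0 has exactly one real solution z, and this solution equals the λ-discounted value v^k_λ of the stochastic game starting at state k. -/

import Mathlib

open Finset Matrix
attribute [local instance] Classical.propDecidable
set_option linter.unusedSectionVars false
set_option linter.unusedVariables false

/-- The minimax value of a matrix game over mixed strategies (simplices). -/
noncomputable def matVal {α β : Type*} [Fintype α] [Fintype β]
    (M : Matrix α β ℝ) : ℝ :=
  ⨆ s : stdSimplex ℝ α, ⨅ t : stdSimplex ℝ β, ∑ a, ∑ b, s.1 a * M a b * t.1 b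

/-- Transition matrix induced by a pure stationary strategy pair. -/
def Qpure {n : ℕ} {I J : Type} (q : Fin n → I → J → Fin n → ℝ)
    (bi : Fin n → I) (bj : Fin n → J) : Matrix (Fin n) (Fin n) ℝ :=
  Matrix.of fun ℓ ℓ' => q ℓ (bi ℓ) (bj ℓ) ℓ'

/-- `d^0_λ(𝐢,𝐣) = det (Id - (1-λ) Q(𝐢,𝐣))`. -/
noncomputable def d0 {n : ℕ} {I J : Type} (q : Fin n → I → J → Fin n → ℝ)
    (lam : ℝ) (bi : Fin n → I) (bj : Fin n → J) : ℝ :=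
  ((1 : Matrix (Fin n) (Fin n) ℝ) - (1 - lam) • Qpure q bi bj).det

/-- `d^k_λ(𝐢,𝐣)`: the same determinant with the `k`-th column replaced by `λ g(𝐢,𝐣)`. -/
noncomputable def dk {n : ℕ} {I J : Type} (g : Fin n → I → J → ℝ)
    (q : Fin n → I → J → Fin n → ℝ) (k : Fin n) (lam : ℝ)
    (bi : Fin n → I) (bj : Fin n → J) : ℝ :=
  (Matrix.updateCol ((1 : Matrix (Fin n) (Fin n) ℝ) - (1 - lam) • Qpure q bi bj) k
    (lam • fun ℓ => g ℓ (bi ℓ) (bj ℓ))).det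

/-- The parameterized matrix `W^k_λ(z)` with entries `d^k_λ(𝐢,𝐣) - z d^0_λ(𝐢,𝐣)` over
pure stationary strategy pairs. -/
noncomputable def Wmat {n : ℕ} {I J : Type} (g : Fin n → I → J → ℝ)
    (q : Fin n → I → J → Fin n → ℝ) (k : Fin n) (lam z : ℝ) :
    Matrix (Fin n → I) (Fin n → J) ℝ :=
  Matrix.of fun bi bj => dk g q k lam bi bj - z * d0 q lam bi bj

/-- The Shapley operator of the game. -/
noncomputable def shapley {n : ℕ} {I J : Type} [Fintype I] [Fintype J]
    (g : Fin n → I → J → ℝ) (q : Fin n → I → J → Fin n → ℝ)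
    (lam : ℝ) (u : Fin n → ℝ) : Fin n → ℝ :=
  fun ℓ => matVal (Matrix.of fun i j =>
    lam * g ℓ i j + (1 - lam) * ∑ ℓ', q ℓ i j ℓ' * u ℓ')



section MMatrix
variable {n : Type*} [Fintype n] [DecidableEq n]

/-- maximum principle: substochastic B, (1-B) w ≥ 0 ⇒ w ≥ 0 -/
lemma nonneg_of_oneSub_mulVec_nonneg {B : Matrix n n ℝ} {r : ℝ} (hr : r < 1)
    (hB0 : ∀ i j, 0 ≤ B i j) (hBs : ∀ i, ∑ j, B i j ≤ r) {w : n → ℝ}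
    (h : ∀ i, 0 ≤ ((1 - B) *ᵥ w) i) : ∀ i, 0 ≤ w i := by
  cases isEmpty_or_nonempty n
  · exact fun i => (IsEmpty.false i).elim
  · by_contra hc
    push_neg at hc
    obtain ⟨i0, hi0⟩ := hc
    obtain ⟨i, -, hmin⟩ := Finset.exists_min_image univ w ⟨i0, mem_univ i0⟩
    have hmneg : w i < 0 := lt_of_le_of_lt (hmin i0 (mem_univ i0)) hi0
    have h1 : ((1 - B) *ᵥ w) i = w i - ∑ j, B i j * w j := by
      simp [Matrix.sub_mulVec, Matrix.mulVec, dotProduct, sub_mul, Finset.sum_sub_distrib,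
        Matrix.one_apply, ite_mul, one_mul, zero_mul]
    have h2 : (∑ j, B i j) * w i ≤ ∑ j, B i j * w j := by
      rw [Finset.sum_mul]
      exact Finset.sum_le_sum fun j _ => mul_le_mul_of_nonneg_left (hmin j (mem_univ j)) (hB0 i j)
    have h3 : r * w i ≤ (∑ j, B i j) * w i :=
      mul_le_mul_of_nonpos_right (hBs i) hmneg.le
    have h4 : 0 ≤ w i - ∑ j, B i j * w j := h1 ▸ h i
    nlinarith

lemma oneSub_det_ne_zero {B : Matrix n n ℝ} {r : ℝ} (hr : r < 1)
    (hB0 : ∀ i j, 0 ≤ B i j) (hBs : ∀ i, ∑ j, B i j ≤ r) :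
    (1 - B).det ≠ 0 := by
  intro hdet
  obtain ⟨w, hw0, hw⟩ := Matrix.exists_mulVec_eq_zero_iff.mpr hdet
  have hz : ∀ i, w i = 0 := by
    intro i
    have hp := nonneg_of_oneSub_mulVec_nonneg hr hB0 hBs (w := w) (by simp [hw]) i
    have hBs' : ∀ i, ∑ j, B i j ≤ r := hBs
    have hn := nonneg_of_oneSub_mulVec_nonneg hr hB0 hBs (w := fun j => -w j) ?_ i
    · linarith [hn]
    · intro i'
      have : (1 - B) *ᵥ (fun j => -w j) = -((1 - B) *ᵥ w) := by
        rw [show (fun j => -w j) = -w from rfl, Matrix.mulVec_neg]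
      simp [this, hw]
  exact hw0 (funext hz)

lemma oneSub_det_pos {B : Matrix n n ℝ} {r : ℝ} (hr0 : 0 ≤ r) (hr : r < 1)
    (hB0 : ∀ i j, 0 ≤ B i j) (hBs : ∀ i, ∑ j, B i j ≤ r) :
    0 < (1 - B).det := by
  rcases lt_or_ge 0 (1 - B).det with h | h
  · exact h
  · exfalso
    have hne : ∀ t ∈ Set.Icc (0:ℝ) 1, ((1 : Matrix n n ℝ) - t • B).det ≠ 0 := by
      intro t ht
      refine oneSub_det_ne_zero (r := r) hr (fun i j => mul_nonneg ht.1 (hB0 i j)) ?_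
      intro i
      calc ∑ j, t * B i j = t * ∑ j, B i j := by rw [Finset.mul_sum]
        _ ≤ 1 * r := mul_le_mul ht.2 (hBs i) (Finset.sum_nonneg fun j _ => hB0 i j) zero_le_one
        _ = r := one_mul r
    have hcont : ContinuousOn (fun t : ℝ => ((1 : Matrix n n ℝ) - t • B).det) (Set.Icc 0 1) := by
      apply Continuous.continuousOn
      apply Continuous.matrix_det
      fun_prop
    have h0 : ((1 : Matrix n n ℝ) - (0:ℝ) • B).det = 1 := by simp
    have hlt : ((1 : Matrix n n ℝ) - (1:ℝ) • B).det < 0 := by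
      rcases lt_or_eq_of_le h with h' | h'
      · simpa using h'
      · exact absurd (by simpa using h') (hne 1 (by norm_num))
    have := intermediate_value_Icc' (by norm_num : (0:ℝ) ≤ 1) hcont
    have hmem : (0:ℝ) ∈ Set.Icc (((1 : Matrix n n ℝ) - (1:ℝ) • B).det) (((1 : Matrix n n ℝ) - (0:ℝ) • B).det) := by
      constructor <;> [exact hlt.le; simp [h0]]
    obtain ⟨t, ht, hdet0⟩ := this hmem
    exact hne t ht hdet0

lemma updateColumn_det_le {B : Matrix n n ℝ} {r : ℝ} (hr0 : 0 ≤ r) (hr : r < 1)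
    (hB0 : ∀ i j, 0 ≤ B i j) (hBs : ∀ i, ∑ j, B i j ≤ r) (b v : n → ℝ) (k : n)
    (hub : ∀ i, b i ≤ (((1 : Matrix n n ℝ) - B) *ᵥ v) i) :
    (((1 : Matrix n n ℝ) - B).updateCol k b).det ≤ ((1 : Matrix n n ℝ) - B).det * v k := by
  set A := (1 : Matrix n n ℝ) - B with hA
  have hdet : IsUnit A.det := (oneSub_det_ne_zero hr hB0 hBs).isUnit
  set w := A⁻¹ *ᵥ b with hw
  have hAw : A *ᵥ w = b := by
    rw [hw, Matrix.mulVec_mulVec, Matrix.mul_nonsing_inv A hdet, Matrix.one_mulVec]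
  have hwk : w k ≤ v k := by
    have h1 : ∀ i, 0 ≤ (A *ᵥ (v - w)) i := by
      intro i
      rw [Matrix.mulVec_sub]
      simpa [hAw] using sub_nonneg.mpr (hub i)
    have := nonneg_of_oneSub_mulVec_nonneg hr hB0 hBs h1 k
    simpa [sub_nonneg] using this
  have hcr : (A.updateCol k b).det = A.det * w k := by
    rw [← Matrix.cramer_apply, ← hAw, Matrix.cramer_eq_adjugate_mulVec,
      Matrix.mulVec_mulVec, Matrix.adjugate_mul, Matrix.smul_mulVec, Matrix.one_mulVec]
    simp
  rw [hcr]
  exact mul_le_mul_of_nonneg_left hwk (oneSub_det_pos hr0 hr hB0 hBs).le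

lemma le_updateColumn_det {B : Matrix n n ℝ} {r : ℝ} (hr0 : 0 ≤ r) (hr : r < 1)
    (hB0 : ∀ i j, 0 ≤ B i j) (hBs : ∀ i, ∑ j, B i j ≤ r) (b v : n → ℝ) (k : n)
    (hub : ∀ i, (((1 : Matrix n n ℝ) - B) *ᵥ v) i ≤ b i) :
    ((1 : Matrix n n ℝ) - B).det * v k ≤ (((1 : Matrix n n ℝ) - B).updateCol k b).det := by
  have := updateColumn_det_le hr0 hr hB0 hBs (fun i => -b i) (fun i => -v i) k ?_
  · have hneg : (((1 : Matrix n n ℝ) - B).updateCol k fun i => -b i).det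
        = -(((1 : Matrix n n ℝ) - B).updateCol k b).det := by
      have : (fun i => -b i) = (-1 : ℝ) • b := by funext i; simp
      rw [this, Matrix.det_updateCol_smul]; ring
    rw [hneg] at this
    nlinarith [this]
  · intro i
    have h2 : ((1 : Matrix n n ℝ) - B) *ᵥ (fun i => -v i) = -(((1 : Matrix n n ℝ) - B) *ᵥ v) := by
      rw [show (fun i => -v i) = -v from rfl, Matrix.mulVec_neg]
    rw [h2]
    simp only [Pi.neg_apply]
    exact neg_le_neg (hub i)

section GameVal
variable {α β : Type*} [Fintype α] [Fintype β] [Nonempty α] [Nonempty β]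

/-- The bilinear payoff. -/
def pay (M : Matrix α β ℝ) (s : α → ℝ) (t : β → ℝ) : ℝ := ∑ a, ∑ b, s a * M a b * t b

lemma pay_eq_col (M : Matrix α β ℝ) (s : α → ℝ) (t : β → ℝ) :
    pay M s t = ∑ b, (∑ a, s a * M a b) * t b := by
  rw [pay, Finset.sum_comm]
  simp [Finset.sum_mul]

lemma pay_eq_row (M : Matrix α β ℝ) (s : α → ℝ) (t : β → ℝ) :
    pay M s t = ∑ a, (∑ b, M a b * t b) * s a := by
  simp only [pay, Finset.sum_mul, Finset.mul_sum]
  congr 1; funext a; congr 1; funext b; ring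

instance instNonemptyStdSimplex : Nonempty (stdSimplex ℝ α) :=
  ⟨⟨_, ite_eq_mem_stdSimplex ℝ (Classical.arbitrary α)⟩⟩

lemma convex_lb {c : ℝ} {f : β → ℝ} {t : β → ℝ} (ht : t ∈ stdSimplex ℝ β)
    (h : ∀ b, c ≤ f b) : c ≤ ∑ b, f b * t b := by
  have : ∑ b, c * t b ≤ ∑ b, f b * t b :=
    Finset.sum_le_sum fun b _ => mul_le_mul_of_nonneg_right (h b) (ht.1 b)
  calc c = c * ∑ b, t b := by rw [ht.2, mul_one]
    _ = ∑ b, c * t b := by rw [Finset.mul_sum]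
    _ ≤ _ := this

lemma convex_ub {c : ℝ} {f : β → ℝ} {t : β → ℝ} (ht : t ∈ stdSimplex ℝ β)
    (h : ∀ b, f b ≤ c) : ∑ b, f b * t b ≤ c := by
  have h' : ∀ b, -c ≤ -f b := fun b => neg_le_neg (h b)
  have := convex_lb (f := fun b => -f b) ht h'
  simp only [neg_mul, Finset.sum_neg_distrib] at this
  linarith

lemma pure_apply_sum (f : β → ℝ) (b0 : β) :
    ∑ b, f b * (if b0 = b then (1:ℝ) else 0) = f b0 := by
  simp [mul_ite, mul_one, mul_zero, Finset.sum_ite_eq]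

/-- lower bound for all payoffs given fixed s -/
lemma inf'_le_pay (M : Matrix α β ℝ) (s : α → ℝ) {t : β → ℝ} (ht : t ∈ stdSimplex ℝ β) :
    univ.inf' univ_nonempty (fun b => ∑ a, s a * M a b) ≤ pay M s t := by
  rw [pay_eq_col]
  exact convex_lb ht fun b => Finset.inf'_le _ (mem_univ b)

lemma bddBelow_pay (M : Matrix α β ℝ) (s : α → ℝ) :
    BddBelow (Set.range fun t : stdSimplex ℝ β => pay M s t.1) :=
  ⟨_, by rintro x ⟨t, rfl⟩; exact inf'_le_pay M s t.2⟩

lemma matVal_def' (M : Matrix α β ℝ) :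
    matVal M = ⨆ s : stdSimplex ℝ α, ⨅ t : stdSimplex ℝ β, pay M s.1 t.1 := rfl

lemma bddAbove_fam (M : Matrix α β ℝ) :
    BddAbove (Set.range fun s : stdSimplex ℝ α => ⨅ t : stdSimplex ℝ β, pay M s.1 t.1) := by
  classical
  set b0 : β := Classical.arbitrary β
  refine ⟨univ.sup' univ_nonempty (fun a => M a b0), ?_⟩
  rintro x ⟨s, rfl⟩
  have h1 : (⨅ t : stdSimplex ℝ β, pay M s.1 t.1) ≤ pay M s.1 (fun b => if b0 = b then 1 else 0) :=
    ciInf_le_of_le (bddBelow_pay M s.1) ⟨_, ite_eq_mem_stdSimplex ℝ b0⟩ le_rfl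
  refine h1.trans ?_
  rw [pay_eq_col]
  have : ∑ b, (∑ a, s.1 a * M a b) * (if b0 = b then (1:ℝ) else 0) = ∑ a, s.1 a * M a b0 :=
    pure_apply_sum _ b0
  rw [this]
  have : ∑ a, s.1 a * M a b0 = ∑ a, M a b0 * s.1 a := by
    congr 1; funext a; ring
  rw [this]
  exact convex_ub s.2 fun a => Finset.le_sup' (fun a => M a b0) (mem_univ a)

lemma le_matVal {M : Matrix α β ℝ} {c : ℝ} {s : α → ℝ} (hs : s ∈ stdSimplex ℝ α)
    (h : ∀ b, c ≤ ∑ a, s a * M a b) : c ≤ matVal M := by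
  rw [matVal_def']
  refine le_ciSup_of_le (bddAbove_fam M) ⟨s, hs⟩ (le_ciInf fun t => ?_)
  rw [pay_eq_col]
  exact convex_lb t.2 h

lemma matVal_le {M : Matrix α β ℝ} {c : ℝ} {t : β → ℝ} (ht : t ∈ stdSimplex ℝ β)
    (h : ∀ a, ∑ b, M a b * t b ≤ c) : matVal M ≤ c := by
  rw [matVal_def']
  refine ciSup_le fun s => ?_
  refine ciInf_le_of_le (bddBelow_pay M s.1) ⟨t, ht⟩ ?_
  rw [pay_eq_row]
  exact convex_ub s.2 h

lemma exists_row_opt (M : Matrix α β ℝ) :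
    ∃ s ∈ stdSimplex ℝ α, ∀ b, matVal M ≤ ∑ a, s a * M a b := by
  classical
  set f : (α → ℝ) → ℝ := fun s => univ.inf' univ_nonempty (fun b => ∑ a, s a * M a b) with hf
  have hfc : Continuous f := by
    refine Continuous.finset_inf'_apply univ_nonempty fun b _ => ?_
    exact continuous_finset_sum _ fun a _ => (continuous_apply a).mul continuous_const
  obtain ⟨s0, hs0, hmax⟩ := (isCompact_stdSimplex ℝ α).exists_isMaxOn
    ⟨(fun a => if Classical.arbitrary α = a then (1:ℝ) else 0),
      ite_eq_mem_stdSimplex ℝ (Classical.arbitrary α)⟩ hfc.continuousOn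
  refine ⟨s0, hs0, fun b => ?_⟩
  have h1 : matVal M ≤ f s0 := by
    rw [matVal_def']
    refine ciSup_le fun s => ?_
    have h2 : (⨅ t : stdSimplex ℝ β, pay M s.1 t.1) ≤ f s.1 := by
      obtain ⟨b1, -, hb1⟩ := Finset.exists_mem_eq_inf' (univ_nonempty) (fun b => ∑ a, s.1 a * M a b)
      have : pay M s.1 (fun b => if b1 = b then 1 else 0) = f s.1 := by
        rw [pay_eq_col, pure_apply_sum, hf]; exact (hb1 ▸ rfl)
      exact ciInf_le_of_le (bddBelow_pay M s.1) ⟨_, ite_eq_mem_stdSimplex ℝ b1⟩ this.le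
    exact h2.trans (isMaxOn_iff.mp hmax s.1 s.2)
  exact h1.trans (Finset.inf'_le _ (mem_univ b))
end GameVal

section Minimax
open Pointwise
variable {α β : Type*} [Fintype α] [Fintype β] [Nonempty α] [Nonempty β]

lemma minimax (M : Matrix α β ℝ) :
    ∃ t ∈ stdSimplex ℝ β, ∀ a, ∑ b, M a b * t b ≤ matVal M := by
  classical
  set R : (β → ℝ) → (α → ℝ) := fun t a => ∑ b, M a b * t b with hR
  have hRc : Continuous R := by
    refine continuous_pi fun a => ?_
    exact continuous_finset_sum _ fun b _ => (continuous_const.mul (continuous_apply b))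
  set G : (β → ℝ) → ℝ := fun t => univ.sup' univ_nonempty (R t) with hG
  have hGc : Continuous G := by
    refine Continuous.finset_sup'_apply univ_nonempty fun a _ => ?_
    exact continuous_finset_sum _ fun b _ => (continuous_const.mul (continuous_apply b))
  obtain ⟨t0, ht0, hmin⟩ := (isCompact_stdSimplex ℝ β).exists_isMinOn
    ⟨(fun b => if Classical.arbitrary β = b then (1:ℝ) else 0),
      ite_eq_mem_stdSimplex ℝ (Classical.arbitrary β)⟩ hGc.continuousOn
  by_cases hle : G t0 ≤ matVal M
  · exact ⟨t0, ht0, fun a => le_trans (Finset.le_sup' (R t0) (mem_univ a)) hle⟩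
  push_neg at hle
  exfalso
  set K : Set (α → ℝ) := {x | ∃ t ∈ stdSimplex ℝ β, ∀ a, R t a ≤ x a} with hK
  have hKconv : Convex ℝ K := by
    rintro x ⟨tx, htx, hx⟩ y ⟨ty, hty, hy⟩ p q hp hq hpq
    refine ⟨p • tx + q • ty, convex_stdSimplex ℝ β htx hty hp hq hpq, fun a => ?_⟩
    have hRlin : R (p • tx + q • ty) a = p * R tx a + q * R ty a := by
      simp only [hR, Pi.add_apply, Pi.smul_apply, smul_eq_mul, mul_add, Finset.mul_sum,
        Finset.sum_add_distrib]
      congr 1 <;> (congr 1; funext b; ring)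
    rw [hRlin]
    have := add_le_add (mul_le_mul_of_nonneg_left (hx a) hp) (mul_le_mul_of_nonneg_left (hy a) hq)
    simpa using this
  have hKclosed : IsClosed K := by
    have hKeq : K = (R '' stdSimplex ℝ β) + {x : α → ℝ | ∀ a, 0 ≤ x a} := by
      ext x
      constructor
      · rintro ⟨t, ht, hta⟩
        exact ⟨R t, ⟨t, ht, rfl⟩, x - R t, fun a => by simpa using hta a, by simp⟩
      · rintro ⟨y, ⟨t, ht, rfl⟩, z, hz, rfl⟩
        exact ⟨t, ht, fun a => by simpa using hz a⟩
    rw [hKeq]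
    have h1 : IsCompact (R '' stdSimplex ℝ β) := (isCompact_stdSimplex ℝ β).image hRc
    have h2 : IsClosed {x : α → ℝ | ∀ a, 0 ≤ x a} := by
      have : {x : α → ℝ | ∀ a, 0 ≤ x a} = ⋂ a, {x : α → ℝ | 0 ≤ x a} := by
        ext x; simp
      rw [this]
      exact isClosed_iInter fun a => isClosed_le continuous_const (continuous_apply a)
    exact h2.add_left_of_isCompact h1
  have hx0 : (fun _ : α => matVal M) ∉ K := by
    rintro ⟨t, ht, hta⟩
    have h1 : G t ≤ matVal M := Finset.sup'_le _ _ fun a _ => hta a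
    have h2 : G t0 ≤ G t := isMinOn_iff.mp hmin t ht
    linarith
  obtain ⟨f, u, hfu, hKgt⟩ := geometric_hahn_banach_point_closed hKconv hKclosed hx0
  set sv : α → ℝ := fun a => f (fun j => if a = j then (1:ℝ) else 0) with hsv
  have hf_eq : ∀ x : α → ℝ, f x = ∑ a, x a * sv a := by
    intro x
    conv_lhs => rw [pi_eq_sum_univ x]
    rw [map_sum]
    congr 1; funext a
    rw [_root_.map_smul]
    simp [hsv]
  have hy0 : R t0 ∈ K := ⟨t0, ht0, fun a => le_rfl⟩
  have hsv_nonneg : ∀ a, 0 ≤ sv a := by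
    intro a0
    by_contra hneg
    push_neg at hneg
    set c : ℝ := (u - 1 - f (R t0)) / sv a0 with hc
    have hu0 : u < f (R t0) := hKgt _ hy0
    have hcpos : 0 < c := div_pos_of_neg_of_neg (by linarith) hneg
    have hmem : (R t0 + c • fun j => if a0 = j then (1:ℝ) else 0) ∈ K := by
      refine ⟨t0, ht0, fun a => ?_⟩
      simp only [Pi.add_apply, Pi.smul_apply, smul_eq_mul]
      have : 0 ≤ c * (if a0 = a then (1:ℝ) else 0) := by
        positivity
      linarith
    have := hKgt _ hmem
    rw [map_add, _root_.map_smul] at this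
    have hfe : f (fun j => if a0 = j then (1:ℝ) else 0) = sv a0 := rfl
    rw [smul_eq_mul, hfe, hc] at this
    rw [div_mul_cancel₀ _ (ne_of_lt hneg)] at this
    linarith
  have hsv_ne : ∃ a, 0 < sv a := by
    by_contra hz
    push_neg at hz
    have : ∀ a, sv a = 0 := fun a => le_antisymm (hz a) (hsv_nonneg a)
    have h1 : f (fun _ => matVal M) = 0 := by
      rw [hf_eq]; simp [this]
    have h2 : f (R t0) = 0 := by
      rw [hf_eq]; simp [this]
    have := hKgt _ hy0
    rw [h2] at this
    rw [h1] at hfu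
    linarith
  set Ssum : ℝ := ∑ a, sv a with hSsum
  have hSsumpos : 0 < Ssum := by
    obtain ⟨a0, ha0⟩ := hsv_ne
    exact Finset.sum_pos' (fun a _ => hsv_nonneg a) ⟨a0, mem_univ a0, ha0⟩
  set s' : α → ℝ := fun a => sv a / Ssum with hs'
  have hs'mem : s' ∈ stdSimplex ℝ α := by
    constructor
    · exact fun a => div_nonneg (hsv_nonneg a) hSsumpos.le
    · rw [← Finset.sum_div]
      exact div_self hSsumpos.ne'
  have hgoal : u / Ssum ≤ matVal M := by
    refine le_matVal hs'mem fun b => ?_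
    have hb : (fun a => M a b) = R (fun b' => if b = b' then (1:ℝ) else 0) := by
      funext a
      rw [hR]
      simp [mul_ite, mul_one, mul_zero, Finset.sum_ite_eq]
    have hmemb : R (fun b' => if b = b' then (1:ℝ) else 0) ∈ K :=
      ⟨_, ite_eq_mem_stdSimplex ℝ b, fun a => le_rfl⟩
    have := hKgt _ hmemb
    rw [hf_eq] at this
    have h2 : u ≤ ∑ a, M a b * sv a := by
      have : ∑ a, R (fun b' => if b = b' then (1:ℝ) else 0) a * sv a = ∑ a, M a b * sv a := by
        congr 1; funext a; rw [← hb]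
      linarith [hKgt _ hmemb, hf_eq (R (fun b' => if b = b' then (1:ℝ) else 0)) ▸ this]
    calc u / Ssum ≤ (∑ a, M a b * sv a) / Ssum := by gcongr
      _ = ∑ a, s' a * M a b := by
          rw [Finset.sum_div]
          congr 1; funext a
          rw [hs']; ring
  have hlt : matVal M < u / Ssum := by
    have h1 : f (fun _ => matVal M) = matVal M * Ssum := by
      rw [hf_eq, hSsum, Finset.mul_sum]
    rw [h1] at hfu
    rw [lt_div_iff₀ hSsumpos]
    exact hfu
  linarith

end Minimax

section Lipschitz
variable {α β : Type*} [Fintype α] [Fintype β] [Nonempty α] [Nonempty β]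

lemma matVal_le_sub {M M' : Matrix α β ℝ} {c : ℝ} (h : ∀ a b, M' a b ≤ M a b - c) :
    matVal M' ≤ matVal M - c := by
  have key : ∀ s t : α → ℝ, ∀ tb : β → ℝ, s ∈ stdSimplex ℝ α → tb ∈ stdSimplex ℝ β →
      pay M' s tb ≤ pay M s tb - c := by
    intro s _ tb hs htb
    have h1 : pay M' s tb ≤ ∑ a, ∑ b, s a * (M a b - c) * tb b := by
      refine Finset.sum_le_sum fun a _ => Finset.sum_le_sum fun b _ => ?_
      have := h a b
      have h0 : 0 ≤ s a * tb b := mul_nonneg (hs.1 a) (htb.1 b)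
      nlinarith
    have h2 : ∑ a, ∑ b, s a * (M a b - c) * tb b = pay M s tb - c := by
      have e1 : ∀ a, ∑ b, s a * (M a b - c) * tb b
          = (∑ b, s a * M a b * tb b) - s a * c := by
        intro a
        have e2 : ∀ b, s a * (M a b - c) * tb b = s a * M a b * tb b - s a * c * tb b :=
          fun b => by ring
        rw [Finset.sum_congr rfl fun b _ => e2 b, Finset.sum_sub_distrib, ← Finset.mul_sum,
          htb.2, mul_one]
      rw [Finset.sum_congr rfl fun a _ => e1 a, Finset.sum_sub_distrib]
      have : ∑ a, s a * c = c := by rw [← Finset.sum_mul, hs.2, one_mul]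
      rw [this]; rfl
    linarith
  rw [matVal_def', matVal_def']
  refine ciSup_le fun s => ?_
  have h1 : (⨅ t : stdSimplex ℝ β, pay M' s.1 t.1) + c ≤ ⨅ t : stdSimplex ℝ β, pay M s.1 t.1 := by
    refine le_ciInf fun t => ?_
    have h2 := ciInf_le (bddBelow_pay M' s.1) t
    have h3 := key s.1 s.1 t.1 s.2 t.2
    linarith
  have h4 : (⨅ t : stdSimplex ℝ β, pay M s.1 t.1) ≤
      ⨆ s : stdSimplex ℝ α, ⨅ t : stdSimplex ℝ β, pay M s.1 t.1 :=
    le_ciSup (bddAbove_fam M) s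
  linarith

end Lipschitz

section Multilin

lemma det_avg_right {m : ℕ} {J : Type} [Fintype J]
    (R : Fin m → J → Fin m → ℝ) (y : Fin m → J → ℝ) :
    ∑ bj : Fin m → J, (∏ ℓ, y ℓ (bj ℓ)) * (Matrix.of fun ℓ => R ℓ (bj ℓ)).det
      = (Matrix.of fun ℓ ℓ' => ∑ j, y ℓ j * R ℓ j ℓ').det := by
  classical
  have h1 : (Matrix.of fun ℓ ℓ' => ∑ j, y ℓ j * R ℓ j ℓ' : Matrix (Fin m) (Fin m) ℝ) =
      Matrix.of (fun ℓ => ∑ j, y ℓ j • R ℓ j) := by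
    ext ℓ ℓ'
    simp [Finset.sum_apply]
  rw [h1]
  have h2 : ((Matrix.of fun ℓ => ∑ j, y ℓ j • R ℓ j) : Matrix (Fin m) (Fin m) ℝ).det
      = (Matrix.detRowAlternating (R := ℝ)).toMultilinearMap (fun ℓ => ∑ j, y ℓ j • R ℓ j) := rfl
  rw [h2, MultilinearMap.map_sum]
  refine Finset.sum_congr rfl fun bj _ => ?_
  have h3 : (fun ℓ => y ℓ (bj ℓ) • R ℓ (bj ℓ)) = fun ℓ => y ℓ (bj ℓ) • (fun ℓ => R ℓ (bj ℓ)) ℓ :=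
    rfl
  rw [h3, MultilinearMap.map_smul_univ]
  simp only [smul_eq_mul]
  rfl

lemma prod_ite_eq_ite {m : ℕ} {J : Type} (f gg : Fin m → J) :
    (∏ ℓ, if f ℓ = gg ℓ then (1:ℝ) else 0) = if f = gg then 1 else 0 := by
  rw [Finset.prod_boole]
  simp [funext_iff]

end Multilin

section Avg
variable {n : ℕ} {I J : Type} [Fintype I] [Fintype J]

lemma sub_mulVec_apply (B : Matrix (Fin n) (Fin n) ℝ) (v : Fin n → ℝ) (ℓ : Fin n) :
    (((1 : Matrix (Fin n) (Fin n) ℝ) - B) *ᵥ v) ℓ = v ℓ - ∑ ℓ', B ℓ ℓ' * v ℓ' := by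
  simp [Matrix.sub_mulVec, Matrix.mulVec, dotProduct, sub_mul, Finset.sum_sub_distrib,
    Matrix.one_apply, ite_mul, one_mul, zero_mul]

lemma avg_dk_le (g : Fin n → I → J → ℝ) (q : Fin n → I → J → Fin n → ℝ)
    (hq0 : ∀ ℓ i j ℓ', 0 ≤ q ℓ i j ℓ') (hq1 : ∀ ℓ i j, ∑ ℓ', q ℓ i j ℓ' = 1)
    {lam : ℝ} (hl0 : 0 < lam) (hl1 : lam ≤ 1) (k : Fin n) (v : Fin n → ℝ)
    (y : Fin n → J → ℝ) (hy : ∀ ℓ, y ℓ ∈ stdSimplex ℝ J)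
    (hopt : ∀ ℓ i, ∑ j, (lam * g ℓ i j + (1 - lam) * ∑ ℓ', q ℓ i j ℓ' * v ℓ') * y ℓ j ≤ v ℓ)
    (bi : Fin n → I) :
    ∑ bj : Fin n → J, (∏ ℓ, y ℓ (bj ℓ)) * dk g q k lam bi bj
      ≤ v k * ∑ bj : Fin n → J, (∏ ℓ, y ℓ (bj ℓ)) * d0 q lam bi bj := by
  classical
  set B : Matrix (Fin n) (Fin n) ℝ :=
    Matrix.of fun ℓ ℓ' => (1 - lam) * ∑ j, y ℓ j * q ℓ (bi ℓ) j ℓ' with hB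
  set bb : Fin n → ℝ := fun ℓ => lam * ∑ j, y ℓ j * g ℓ (bi ℓ) j with hbb
  have hyn : ∀ ℓ j, 0 ≤ y ℓ j := fun ℓ => (hy ℓ).1
  have hys : ∀ ℓ, ∑ j, y ℓ j = 1 := fun ℓ => (hy ℓ).2
  have havg : ∀ ℓ ℓ', ∑ j, y ℓ j * ((if ℓ = ℓ' then (1:ℝ) else 0) - (1 - lam) * q ℓ (bi ℓ) j ℓ')
      = ((1 : Matrix (Fin n) (Fin n) ℝ) - B) ℓ ℓ' := by
    intro ℓ ℓ'
    have e : ∑ j, y ℓ j * ((if ℓ = ℓ' then (1:ℝ) else 0) - (1 - lam) * q ℓ (bi ℓ) j ℓ')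
        = (if ℓ = ℓ' then (1:ℝ) else 0) * (∑ j, y ℓ j)
          - (1 - lam) * ∑ j, y ℓ j * q ℓ (bi ℓ) j ℓ' := by
      rw [Finset.mul_sum, Finset.mul_sum, ← Finset.sum_sub_distrib]
      congr 1 with j
      ring
    rw [e, hys ℓ, mul_one]
    simp [hB, Matrix.sub_apply, Matrix.one_apply]
  have hA : ∑ bj : Fin n → J, (∏ ℓ, y ℓ (bj ℓ)) * d0 q lam bi bj
      = ((1 : Matrix (Fin n) (Fin n) ℝ) - B).det := by
    have e0 : ∀ bj, d0 q lam bi bj = (Matrix.of fun ℓ =>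
        (fun j ℓ' => (if ℓ = ℓ' then (1:ℝ) else 0) - (1 - lam) * q ℓ (bi ℓ) j ℓ') (bj ℓ)).det := by
      intro bj
      unfold d0
      refine congrArg Matrix.det ?_
      ext ℓ ℓ'
      simp [Qpure, Matrix.one_apply]
    rw [Finset.sum_congr rfl fun bj _ => by rw [e0 bj],
      det_avg_right (fun ℓ j ℓ' => (if ℓ = ℓ' then (1:ℝ) else 0) - (1 - lam) * q ℓ (bi ℓ) j ℓ') y]
    congr 1
    ext ℓ ℓ'
    simp only [Matrix.of_apply]
    exact havg ℓ ℓ'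
  have hAk : ∑ bj : Fin n → J, (∏ ℓ, y ℓ (bj ℓ)) * dk g q k lam bi bj
      = (((1 : Matrix (Fin n) (Fin n) ℝ) - B).updateCol k bb).det := by
    have e0 : ∀ bj, dk g q k lam bi bj = (Matrix.of fun ℓ =>
        (fun j ℓ' => if ℓ' = k then lam * g ℓ (bi ℓ) j
          else (if ℓ = ℓ' then (1:ℝ) else 0) - (1 - lam) * q ℓ (bi ℓ) j ℓ') (bj ℓ)).det := by
      intro bj
      unfold dk
      refine congrArg Matrix.det ?_
      ext ℓ ℓ'
      by_cases hk : ℓ' = k <;>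
        simp [Matrix.updateCol_apply, hk, Qpure, Matrix.one_apply]
    rw [Finset.sum_congr rfl fun bj _ => by rw [e0 bj],
      det_avg_right (fun ℓ j ℓ' => if ℓ' = k then lam * g ℓ (bi ℓ) j
        else (if ℓ = ℓ' then (1:ℝ) else 0) - (1 - lam) * q ℓ (bi ℓ) j ℓ') y]
    congr 1
    ext ℓ ℓ'
    by_cases hk : ℓ' = k
    · simp only [Matrix.of_apply, hk, if_true, Matrix.updateCol_apply, if_pos rfl, hbb,
        Finset.mul_sum]
      exact Finset.sum_congr rfl fun j _ => by ring
    · simp only [Matrix.of_apply, hk, if_false, Matrix.updateCol_apply, if_neg hk]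
      exact havg ℓ ℓ'
  have hB0 : ∀ ℓ ℓ', 0 ≤ B ℓ ℓ' := fun ℓ ℓ' =>
    mul_nonneg (by linarith) (Finset.sum_nonneg fun j _ => mul_nonneg (hyn ℓ j) (hq0 _ _ _ _))
  have hBs : ∀ ℓ, ∑ ℓ', B ℓ ℓ' ≤ 1 - lam := by
    intro ℓ
    have e : ∑ ℓ', (1 - lam) * ∑ j, y ℓ j * q ℓ (bi ℓ) j ℓ'
        = (1 - lam) * ∑ j, y ℓ j * ∑ ℓ', q ℓ (bi ℓ) j ℓ' := by
      rw [← Finset.mul_sum, Finset.sum_comm]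
      congr 1
      exact Finset.sum_congr rfl fun j _ => (Finset.mul_sum _ _ _).symm
    have : ∑ ℓ', B ℓ ℓ' = 1 - lam := by
      simp only [hB, Matrix.of_apply]
      rw [e]
      simp only [hq1]
      rw [Finset.sum_congr rfl fun j _ => mul_one (y ℓ j), hys ℓ, mul_one]
    exact this.le
  have hl3 : ∀ ℓ, ∑ j, (1 - lam) * (∑ ℓ', q ℓ (bi ℓ) j ℓ' * v ℓ') * y ℓ j
      = ∑ ℓ', B ℓ ℓ' * v ℓ' := by
    intro ℓ
    have r1 : ∀ j, (1 - lam) * (∑ ℓ', q ℓ (bi ℓ) j ℓ' * v ℓ') * y ℓ j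
        = ∑ ℓ', (1 - lam) * (q ℓ (bi ℓ) j ℓ' * v ℓ') * y ℓ j := by
      intro j
      simp only [Finset.mul_sum, Finset.sum_mul]
    rw [Finset.sum_congr rfl fun j _ => r1 j, Finset.sum_comm]
    refine Finset.sum_congr rfl fun ℓ' _ => ?_
    simp only [hB, Matrix.of_apply, Finset.mul_sum, Finset.sum_mul]
    refine Finset.sum_congr rfl fun j _ => by ring
  have hub : ∀ ℓ, bb ℓ ≤ (((1 : Matrix (Fin n) (Fin n) ℝ) - B) *ᵥ v) ℓ := by
    intro ℓ
    have h1 := hopt ℓ (bi ℓ)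
    have l1 : ∑ j, (lam * g ℓ (bi ℓ) j + (1 - lam) * ∑ ℓ', q ℓ (bi ℓ) j ℓ' * v ℓ') * y ℓ j
        = (∑ j, lam * g ℓ (bi ℓ) j * y ℓ j)
          + ∑ j, (1 - lam) * (∑ ℓ', q ℓ (bi ℓ) j ℓ' * v ℓ') * y ℓ j := by
      rw [← Finset.sum_add_distrib]
      congr 1 with j
      ring
    have l2 : (∑ j, lam * g ℓ (bi ℓ) j * y ℓ j) = bb ℓ := by
      simp only [hbb, Finset.mul_sum]
      exact Finset.sum_congr rfl fun j _ => by ring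
    rw [l1, l2, hl3 ℓ] at h1
    rw [sub_mulVec_apply]
    linarith
  have key := updateColumn_det_le (B := B) (r := 1 - lam) (by linarith) (by linarith)
    hB0 hBs bb v k hub
  rw [hA, hAk]
  exact key.trans_eq (mul_comm _ _)
end Avg

section Avg2
variable {n : ℕ} {I J : Type} [Fintype I] [Fintype J]

lemma avg_dk_ge (g : Fin n → I → J → ℝ) (q : Fin n → I → J → Fin n → ℝ)
    (hq0 : ∀ ℓ i j ℓ', 0 ≤ q ℓ i j ℓ') (hq1 : ∀ ℓ i j, ∑ ℓ', q ℓ i j ℓ' = 1)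
    {lam : ℝ} (hl0 : 0 < lam) (hl1 : lam ≤ 1) (k : Fin n) (v : Fin n → ℝ)
    (x : Fin n → I → ℝ) (hx : ∀ ℓ, x ℓ ∈ stdSimplex ℝ I)
    (hopt : ∀ ℓ j, v ℓ ≤ ∑ i, x ℓ i * (lam * g ℓ i j + (1 - lam) * ∑ ℓ', q ℓ i j ℓ' * v ℓ'))
    (bj : Fin n → J) :
    v k * ∑ bi : Fin n → I, (∏ ℓ, x ℓ (bi ℓ)) * d0 q lam bi bj
      ≤ ∑ bi : Fin n → I, (∏ ℓ, x ℓ (bi ℓ)) * dk g q k lam bi bj := by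
  classical
  set B : Matrix (Fin n) (Fin n) ℝ :=
    Matrix.of fun ℓ ℓ' => (1 - lam) * ∑ i, x ℓ i * q ℓ i (bj ℓ) ℓ' with hB
  set bb : Fin n → ℝ := fun ℓ => lam * ∑ i, x ℓ i * g ℓ i (bj ℓ) with hbb
  have hxn : ∀ ℓ i, 0 ≤ x ℓ i := fun ℓ => (hx ℓ).1
  have hxs : ∀ ℓ, ∑ i, x ℓ i = 1 := fun ℓ => (hx ℓ).2
  have havg : ∀ ℓ ℓ', ∑ i, x ℓ i * ((if ℓ = ℓ' then (1:ℝ) else 0) - (1 - lam) * q ℓ i (bj ℓ) ℓ')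
      = ((1 : Matrix (Fin n) (Fin n) ℝ) - B) ℓ ℓ' := by
    intro ℓ ℓ'
    have e : ∑ i, x ℓ i * ((if ℓ = ℓ' then (1:ℝ) else 0) - (1 - lam) * q ℓ i (bj ℓ) ℓ')
        = (if ℓ = ℓ' then (1:ℝ) else 0) * (∑ i, x ℓ i)
          - (1 - lam) * ∑ i, x ℓ i * q ℓ i (bj ℓ) ℓ' := by
      rw [Finset.mul_sum, Finset.mul_sum, ← Finset.sum_sub_distrib]
      congr 1 with i
      ring
    rw [e, hxs ℓ, mul_one]
    simp [hB, Matrix.sub_apply, Matrix.one_apply]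
  have hA : ∑ bi : Fin n → I, (∏ ℓ, x ℓ (bi ℓ)) * d0 q lam bi bj
      = ((1 : Matrix (Fin n) (Fin n) ℝ) - B).det := by
    have e0 : ∀ bi, d0 q lam bi bj = (Matrix.of fun ℓ =>
        (fun i ℓ' => (if ℓ = ℓ' then (1:ℝ) else 0) - (1 - lam) * q ℓ i (bj ℓ) ℓ') (bi ℓ)).det := by
      intro bi
      unfold d0
      refine congrArg Matrix.det ?_
      ext ℓ ℓ'
      simp [Qpure, Matrix.one_apply]
    rw [Finset.sum_congr rfl fun bi _ => by rw [e0 bi],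
      det_avg_right (fun ℓ i ℓ' => (if ℓ = ℓ' then (1:ℝ) else 0) - (1 - lam) * q ℓ i (bj ℓ) ℓ') x]
    congr 1
    ext ℓ ℓ'
    simp only [Matrix.of_apply]
    exact havg ℓ ℓ'
  have hAk : ∑ bi : Fin n → I, (∏ ℓ, x ℓ (bi ℓ)) * dk g q k lam bi bj
      = (((1 : Matrix (Fin n) (Fin n) ℝ) - B).updateCol k bb).det := by
    have e0 : ∀ bi, dk g q k lam bi bj = (Matrix.of fun ℓ =>
        (fun i ℓ' => if ℓ' = k then lam * g ℓ i (bj ℓ)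
          else (if ℓ = ℓ' then (1:ℝ) else 0) - (1 - lam) * q ℓ i (bj ℓ) ℓ') (bi ℓ)).det := by
      intro bi
      unfold dk
      refine congrArg Matrix.det ?_
      ext ℓ ℓ'
      by_cases hk : ℓ' = k <;>
        simp [Matrix.updateCol_apply, hk, Qpure, Matrix.one_apply]
    rw [Finset.sum_congr rfl fun bi _ => by rw [e0 bi],
      det_avg_right (fun ℓ i ℓ' => if ℓ' = k then lam * g ℓ i (bj ℓ)
        else (if ℓ = ℓ' then (1:ℝ) else 0) - (1 - lam) * q ℓ i (bj ℓ) ℓ') x]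
    congr 1
    ext ℓ ℓ'
    by_cases hk : ℓ' = k
    · simp only [Matrix.of_apply, hk, if_true, Matrix.updateCol_apply, if_pos rfl, hbb,
        Finset.mul_sum]
      exact Finset.sum_congr rfl fun i _ => by ring
    · simp only [Matrix.of_apply, hk, if_false, Matrix.updateCol_apply, if_neg hk]
      exact havg ℓ ℓ'
  have hB0 : ∀ ℓ ℓ', 0 ≤ B ℓ ℓ' := fun ℓ ℓ' =>
    mul_nonneg (by linarith) (Finset.sum_nonneg fun i _ => mul_nonneg (hxn ℓ i) (hq0 _ _ _ _))
  have hBs : ∀ ℓ, ∑ ℓ', B ℓ ℓ' ≤ 1 - lam := by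
    intro ℓ
    have e : ∑ ℓ', (1 - lam) * ∑ i, x ℓ i * q ℓ i (bj ℓ) ℓ'
        = (1 - lam) * ∑ i, x ℓ i * ∑ ℓ', q ℓ i (bj ℓ) ℓ' := by
      rw [← Finset.mul_sum, Finset.sum_comm]
      congr 1
      exact Finset.sum_congr rfl fun i _ => (Finset.mul_sum _ _ _).symm
    have : ∑ ℓ', B ℓ ℓ' = 1 - lam := by
      simp only [hB, Matrix.of_apply]
      rw [e]
      simp only [hq1]
      rw [Finset.sum_congr rfl fun i _ => mul_one (x ℓ i), hxs ℓ, mul_one]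
    exact this.le
  have hl3 : ∀ ℓ, ∑ i, x ℓ i * ((1 - lam) * ∑ ℓ', q ℓ i (bj ℓ) ℓ' * v ℓ')
      = ∑ ℓ', B ℓ ℓ' * v ℓ' := by
    intro ℓ
    have r1 : ∀ i, x ℓ i * ((1 - lam) * ∑ ℓ', q ℓ i (bj ℓ) ℓ' * v ℓ')
        = ∑ ℓ', x ℓ i * ((1 - lam) * (q ℓ i (bj ℓ) ℓ' * v ℓ')) := by
      intro i
      simp only [Finset.mul_sum]
    rw [Finset.sum_congr rfl fun i _ => r1 i, Finset.sum_comm]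
    refine Finset.sum_congr rfl fun ℓ' _ => ?_
    simp only [hB, Matrix.of_apply, Finset.mul_sum, Finset.sum_mul]
    refine Finset.sum_congr rfl fun i _ => by ring
  have hub : ∀ ℓ, (((1 : Matrix (Fin n) (Fin n) ℝ) - B) *ᵥ v) ℓ ≤ bb ℓ := by
    intro ℓ
    have h1 := hopt ℓ (bj ℓ)
    have l1 : ∑ i, x ℓ i * (lam * g ℓ i (bj ℓ) + (1 - lam) * ∑ ℓ', q ℓ i (bj ℓ) ℓ' * v ℓ')
        = (∑ i, x ℓ i * (lam * g ℓ i (bj ℓ)))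
          + ∑ i, x ℓ i * ((1 - lam) * ∑ ℓ', q ℓ i (bj ℓ) ℓ' * v ℓ') := by
      rw [← Finset.sum_add_distrib]
      congr 1 with i
      ring
    have l2 : (∑ i, x ℓ i * (lam * g ℓ i (bj ℓ))) = bb ℓ := by
      simp only [hbb, Finset.mul_sum]
      exact Finset.sum_congr rfl fun i _ => by ring
    rw [l1, l2, hl3 ℓ] at h1
    rw [sub_mulVec_apply]
    linarith
  have key := le_updateColumn_det (B := B) (r := 1 - lam) (by linarith) (by linarith)
    hB0 hBs bb v k hub
  rw [hA, hAk]
  exact (mul_comm _ _).trans_le key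
end Avg2

section Final
variable {n : ℕ} {I J : Type} [Fintype I] [Fintype J]

lemma prod_simplex {γ : Type} [Fintype γ] (y : Fin n → γ → ℝ)
    (hy : ∀ ℓ, y ℓ ∈ stdSimplex ℝ γ) :
    (fun b : Fin n → γ => ∏ ℓ, y ℓ (b ℓ)) ∈ stdSimplex ℝ (Fin n → γ) := by
  constructor
  · intro b
    exact Finset.prod_nonneg fun ℓ _ => (hy ℓ).1 _
  · have h := Finset.prod_univ_sum (fun _ : Fin n => (Finset.univ : Finset γ))
      (fun ℓ j => y ℓ j)
    rw [Fintype.piFinset_univ] at h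
    rw [← h]
    rw [Finset.prod_congr rfl fun ℓ _ => (hy ℓ).2]
    exact Finset.prod_const_one

lemma d0_pos (q : Fin n → I → J → Fin n → ℝ)
    (hq0 : ∀ ℓ i j ℓ', 0 ≤ q ℓ i j ℓ') (hq1 : ∀ ℓ i j, ∑ ℓ', q ℓ i j ℓ' = 1)
    {lam : ℝ} (hl0 : 0 < lam) (hl1 : lam ≤ 1) (bi : Fin n → I) (bj : Fin n → J) :
    0 < d0 q lam bi bj := by
  unfold d0
  refine oneSub_det_pos (r := 1 - lam) (by linarith) (by linarith) ?_ ?_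
  · intro ℓ ℓ'
    simp only [Matrix.smul_apply, Qpure, Matrix.of_apply, smul_eq_mul]
    exact mul_nonneg (by linarith) (hq0 _ _ _ _)
  · intro ℓ
    simp only [Matrix.smul_apply, Qpure, Matrix.of_apply, smul_eq_mul]
    rw [← Finset.mul_sum, hq1]
    simp
end Final

/-- **Theorem 1.** The equation `val W^k_λ(z) = 0` has exactly one real solution, which
is the `λ`-discounted value `v^k_λ`, i.e. the `k`-th coordinate of the fixed point of
the Shapley operator. -/
theorem stmt15 (n : ℕ) (I J : Type) [Fintype I] [Fintype J] [Nonempty I] [Nonempty J]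
    (g : Fin n → I → J → ℝ) (q : Fin n → I → J → Fin n → ℝ)
    (hq0 : ∀ ℓ i j ℓ', 0 ≤ q ℓ i j ℓ') (hq1 : ∀ ℓ i j, ∑ ℓ', q ℓ i j ℓ' = 1)
    (lam : ℝ) (hl0 : 0 < lam) (hl1 : lam ≤ 1) (k : Fin n)
    (v : Fin n → ℝ) (hv : shapley g q lam v = v) :
    ∀ z : ℝ, matVal (Wmat g q k lam z) = 0 ↔ z = v k := by
  intro z
  haveI : Nonempty (Fin n) := ⟨k⟩
  have hval : ∀ ℓ, matVal (Matrix.of fun i j =>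
      lam * g ℓ i j + (1 - lam) * ∑ ℓ', q ℓ i j ℓ' * v ℓ') = v ℓ := fun ℓ => congrFun hv ℓ
  have hminmax := fun ℓ => minimax (Matrix.of fun i j =>
    lam * g ℓ i j + (1 - lam) * ∑ ℓ', q ℓ i j ℓ' * v ℓ')
  choose y hy hyopt using hminmax
  have hyopt' : ∀ ℓ i, ∑ j, (lam * g ℓ i j + (1 - lam) * ∑ ℓ', q ℓ i j ℓ' * v ℓ') * y ℓ j
      ≤ v ℓ := by
    intro ℓ i
    have := hyopt ℓ i
    rw [hval ℓ] at this
    simpa using this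
  have hmaxmax := fun ℓ => exists_row_opt (Matrix.of fun i j =>
    lam * g ℓ i j + (1 - lam) * ∑ ℓ', q ℓ i j ℓ' * v ℓ')
  choose x hx hxopt using hmaxmax
  have hxopt' : ∀ ℓ j, v ℓ ≤ ∑ i, x ℓ i *
      (lam * g ℓ i j + (1 - lam) * ∑ ℓ', q ℓ i j ℓ' * v ℓ') := by
    intro ℓ j
    have := hxopt ℓ j
    rw [hval ℓ] at this
    simpa using this
  have hzero : matVal (Wmat g q k lam (v k)) = 0 := by
    apply le_antisymm
    · refine matVal_le (t := fun bj : Fin n → J => ∏ ℓ, y ℓ (bj ℓ)) (prod_simplex y hy) ?_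
      intro bi
      have h1 : ∑ bj : Fin n → J, Wmat g q k lam (v k) bi bj * (∏ ℓ, y ℓ (bj ℓ))
          = (∑ bj : Fin n → J, (∏ ℓ, y ℓ (bj ℓ)) * dk g q k lam bi bj)
            - v k * ∑ bj : Fin n → J, (∏ ℓ, y ℓ (bj ℓ)) * d0 q lam bi bj := by
        rw [Finset.mul_sum, ← Finset.sum_sub_distrib]
        refine Finset.sum_congr rfl fun bj _ => ?_
        simp only [Wmat, Matrix.of_apply]
        ring
      rw [h1]
      have := avg_dk_le g q hq0 hq1 hl0 hl1 k v y hy hyopt' bi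
      linarith
    · refine le_matVal (s := fun bi : Fin n → I => ∏ ℓ, x ℓ (bi ℓ)) (prod_simplex x hx) ?_
      intro bj
      have h1 : ∑ bi : Fin n → I, (∏ ℓ, x ℓ (bi ℓ)) * Wmat g q k lam (v k) bi bj
          = (∑ bi : Fin n → I, (∏ ℓ, x ℓ (bi ℓ)) * dk g q k lam bi bj)
            - v k * ∑ bi : Fin n → I, (∏ ℓ, x ℓ (bi ℓ)) * d0 q lam bi bj := by
        rw [Finset.mul_sum, ← Finset.sum_sub_distrib]
        refine Finset.sum_congr rfl fun bi _ => ?_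
        simp only [Wmat, Matrix.of_apply]
        ring
      rw [h1]
      have := avg_dk_ge g q hq0 hq1 hl0 hl1 k v x hx hxopt' bj
      linarith
  have hd0pos : ∀ (bi : Fin n → I) (bj : Fin n → J), 0 < d0 q lam bi bj :=
    fun bi bj => d0_pos q hq0 hq1 hl0 hl1 bi bj
  set dmin : ℝ := (Finset.univ : Finset ((Fin n → I) × (Fin n → J))).inf' univ_nonempty
    (fun p => d0 q lam p.1 p.2) with hdmin
  have hdmin_le : ∀ bi bj, dmin ≤ d0 q lam bi bj :=
    fun bi bj => Finset.inf'_le _ (mem_univ (bi, bj))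
  have hdminpos : 0 < dmin := by
    obtain ⟨p, -, hp⟩ := Finset.exists_mem_eq_inf'
      (univ_nonempty : (Finset.univ : Finset ((Fin n → I) × (Fin n → J))).Nonempty)
      (fun p => d0 q lam p.1 p.2)
    rw [hdmin, hp]
    exact hd0pos p.1 p.2
  have hmono : ∀ z1 z2 : ℝ, z1 < z2 →
      matVal (Wmat g q k lam z2) ≤ matVal (Wmat g q k lam z1) - (z2 - z1) * dmin := by
    intro z1 z2 h12
    apply matVal_le_sub
    intro bi bj
    simp only [Wmat, Matrix.of_apply]
    have h3 := hdmin_le bi bj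
    nlinarith [hd0pos bi bj]
  constructor
  · intro h0
    by_contra hne
    rcases lt_or_gt_of_ne hne with hlt | hgt
    · have := hmono z (v k) hlt
      rw [hzero, h0] at this
      nlinarith
    · have := hmono (v k) z hgt
      rw [hzero, h0] at this
      nlinarith
  · rintro rfl
    exact hzero
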